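/- Let T_1, ..., T_M be operators on ℝ^d, each α-averaged for some α ∈ (0,1], let λ ∈ (0, 1/α), let H ≥ 1 be an integer, and set 𝒯̃_λ = (1/M) Σ_{i=1}^M (λT_i + (1−λ)Id)^H and ζ = Hαλ / (1 + (H−1)αλ). Let x† be a fixed point of 𝒯̃_λ and let (y_n) be defined by y_{n+1} = 𝒯̃_λ(y_n) from an arbitrary y_0 ∈ ℝ^d. Then for every n ∈ ℕ, ‖y_{n+1} − y_n‖² ≤ ‖y_0 − x†‖² / (ζ(1−ζ)(n+1)). -/

import Mathlib

variable {E : Type*} [NormedAddCommGroup E] [InnerProductSpace ℝ E]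

/-- The "averagedness" inequality with parameter `s = (1-β)/β`. -/
def QProp (s : ℝ) (f : E → E) : Prop :=
  ∀ x y : E, ‖f x - f y‖ ^ 2 + s * ‖(x - f x) - (y - f y)‖ ^ 2 ≤ ‖x - y‖ ^ 2

lemma key1 (u v : E) (β : ℝ) (h : ‖u‖ ≤ ‖v‖) (hβ0 : 0 < β) (hβ1 : β ≤ 1) :
    ‖β • u + (1 - β) • v‖ ^ 2 + ((1 - β) / β) * ‖β • (v - u)‖ ^ 2 ≤ ‖v‖ ^ 2 := by
  have e1 : ‖β • u + (1 - β) • v‖ ^ 2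
      = β ^ 2 * ‖u‖ ^ 2 + 2 * (β * (1 - β)) * inner ℝ u v + (1 - β) ^ 2 * ‖v‖ ^ 2 := by
    rw [norm_add_sq_real, norm_smul, norm_smul, real_inner_smul_left, real_inner_smul_right]
    rw [Real.norm_eq_abs, Real.norm_eq_abs, abs_of_pos hβ0, abs_of_nonneg (by linarith)]
    ring
  have e2 : ‖β • (v - u)‖ ^ 2 = β ^ 2 * (‖v‖ ^ 2 - 2 * inner ℝ u v + ‖u‖ ^ 2) := by
    rw [norm_smul, Real.norm_eq_abs, abs_of_pos hβ0, mul_pow, norm_sub_sq_real,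
      real_inner_comm u v]
  have hdiv : ∀ X : ℝ, (1 - β) / β * (β ^ 2 * X) = (1 - β) * β * X := by
    intro X; field_simp
  have hsq : ‖u‖ ^ 2 ≤ ‖v‖ ^ 2 := by nlinarith [norm_nonneg u, norm_nonneg v]
  rw [e1, e2, hdiv]
  nlinarith [norm_nonneg u, norm_nonneg v]

lemma avg_to_Q (g f : E → E) (β : ℝ) (hβ0 : 0 < β) (hβ1 : β ≤ 1)
    (hg : ∀ x y, ‖g x - g y‖ ≤ ‖x - y‖)
    (hf : ∀ x, f x = β • g x + (1 - β) • x) : QProp ((1 - β) / β) f := by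
  intro x y
  have h1 : f x - f y = β • (g x - g y) + (1 - β) • (x - y) := by
    rw [hf x, hf y]; module
  have h2 : (x - f x) - (y - f y) = β • ((x - y) - (g x - g y)) := by
    rw [hf x, hf y]; module
  rw [h1, h2]
  exact key1 _ _ β (hg x y) hβ0 hβ1

lemma Q_comp (f g : E → E) (s1 s2 : ℝ) (hs1 : 0 < s1) (hs2 : 0 < s2)
    (hf : QProp s1 f) (hg : QProp s2 g) : QProp (s1 * s2 / (s1 + s2)) (f ∘ g) := by
  intro x y
  set a := (x - g x) - (y - g y) with ha
  set b := (g x - f (g x)) - (g y - f (g y)) with hb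
  have hab : (x - (f ∘ g) x) - (y - (f ∘ g) y) = a + b := by
    simp only [Function.comp_apply, ha, hb]; abel
  have h1 := hf (g x) (g y)
  have h2 := hg x y
  have key : (s1 * s2 / (s1 + s2)) * ‖a + b‖ ^ 2 ≤ s2 * ‖a‖ ^ 2 + s1 * ‖b‖ ^ 2 := by
    have hip := real_inner_le_norm a b
    have e : ‖a + b‖ ^ 2 = ‖a‖ ^ 2 + 2 * inner ℝ a b + ‖b‖ ^ 2 := norm_add_sq_real a b
    rw [e, div_mul_eq_mul_div, div_le_iff₀ (by positivity)]
    nlinarith [norm_nonneg a, norm_nonneg b, sq_nonneg (s2 * ‖a‖ - s1 * ‖b‖),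
      mul_pos hs1 hs2, mul_nonneg (mul_pos hs1 hs2).le (norm_nonneg a),
      mul_nonneg (mul_pos hs1 hs2).le (norm_nonneg b)]
  rw [hab]
  simp only [Function.comp_apply]
  linarith

lemma Q_iter (f : E → E) (s : ℝ) (hs : 0 < s) (hf : QProp s f) :
    ∀ H : ℕ, 1 ≤ H → QProp (s / H) (f^[H]) := by
  intro H
  induction H with
  | zero => omega
  | succ k ih =>
    intro _
    rcases Nat.eq_zero_or_pos k with hk | hk
    · subst hk; simpa using hf
    · have hQk := ih hk
      have hkR : (0 : ℝ) < k := by exact_mod_cast hk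
      have hcomp := Q_comp f (f^[k]) s (s / k) hs (by positivity) hf hQk
      have hsum : s + s / (k : ℝ) = s * ((k : ℝ) + 1) / k := by field_simp
      have harith : s * (s / (k : ℝ)) / (s + s / (k : ℝ)) = s / ((k : ℝ) + 1) := by
        rw [hsum]
        field_simp
      rw [harith] at hcomp
      rw [Function.iterate_succ']
      push_cast
      exact hcomp

lemma jensen {M : ℕ} (hM : 0 < M) (z : Fin M → E) :
    ‖(M : ℝ)⁻¹ • ∑ i, z i‖ ^ 2 ≤ (M : ℝ)⁻¹ * ∑ i, ‖z i‖ ^ 2 := by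
  have hM' : (0 : ℝ) < M := by exact_mod_cast hM
  have h1 : ‖(M : ℝ)⁻¹ • ∑ i, z i‖ = (M : ℝ)⁻¹ * ‖∑ i, z i‖ := by
    rw [norm_smul, Real.norm_eq_abs, abs_of_pos (by positivity)]
  have h2 : ‖∑ i, z i‖ ≤ ∑ i, ‖z i‖ := norm_sum_le _ _
  have h3 : (∑ i, ‖z i‖) ^ 2 ≤ (M : ℝ) * ∑ i, ‖z i‖ ^ 2 := by
    have := sq_sum_le_card_mul_sum_sq (s := (Finset.univ : Finset (Fin M)))
      (f := fun i => ‖z i‖)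
    simpa using this
  have h4 : ‖∑ i, z i‖ ^ 2 ≤ (∑ i, ‖z i‖) ^ 2 := by
    apply pow_le_pow_left₀ (norm_nonneg _) h2
  calc ‖(M : ℝ)⁻¹ • ∑ i, z i‖ ^ 2 = (M : ℝ)⁻¹ ^ 2 * ‖∑ i, z i‖ ^ 2 := by rw [h1]; ring
    _ ≤ (M : ℝ)⁻¹ ^ 2 * ((M : ℝ) * ∑ i, ‖z i‖ ^ 2) := by
        apply mul_le_mul_of_nonneg_left (h4.trans h3) (by positivity)
    _ = (M : ℝ)⁻¹ * ∑ i, ‖z i‖ ^ 2 := by field_simp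

lemma Q_avg {M : ℕ} (hM : 0 < M) (f : Fin M → E → E) (s : ℝ) (hs : 0 ≤ s)
    (hf : ∀ i, QProp s (f i)) :
    QProp s (fun x => (M : ℝ)⁻¹ • ∑ i, f i x) := by
  intro x y
  have hM' : (0 : ℝ) < M := by exact_mod_cast hM
  have hid : ∀ w : E, (M : ℝ)⁻¹ • ∑ _i : Fin M, w = w := by
    intro w
    rw [Finset.sum_const, Finset.card_univ, Fintype.card_fin,
      ← Nat.cast_smul_eq_nsmul ℝ, smul_smul, inv_mul_cancel₀ hM'.ne', one_smul]
  have hFsub : (fun x => (M : ℝ)⁻¹ • ∑ i, f i x) x - (fun x => (M : ℝ)⁻¹ • ∑ i, f i x) y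
      = (M : ℝ)⁻¹ • ∑ i, (f i x - f i y) := by
    simp only [Finset.sum_sub_distrib, smul_sub]
  have hv : (x - (fun x => (M : ℝ)⁻¹ • ∑ i, f i x) x)
      - (y - (fun x => (M : ℝ)⁻¹ • ∑ i, f i x) y)
      = (M : ℝ)⁻¹ • ∑ i, ((x - f i x) - (y - f i y)) := by
    simp only [Finset.sum_sub_distrib, smul_sub, hid]
  rw [hFsub, hv]
  have j1 := jensen hM (fun i => f i x - f i y)
  have j2 := jensen hM (fun i => (x - f i x) - (y - f i y))
  have hsum : (M : ℝ)⁻¹ * (∑ i, ‖f i x - f i y‖ ^ 2)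
      + s * ((M : ℝ)⁻¹ * ∑ i, ‖(x - f i x) - (y - f i y)‖ ^ 2) ≤ ‖x - y‖ ^ 2 := by
    have hst : ∑ i, (‖f i x - f i y‖ ^ 2 + s * ‖(x - f i x) - (y - f i y)‖ ^ 2)
        ≤ ∑ _i : Fin M, ‖x - y‖ ^ 2 := Finset.sum_le_sum (fun i _ => hf i x y)
    rw [Finset.sum_add_distrib, Finset.sum_const, Finset.card_univ, Fintype.card_fin,
      nsmul_eq_mul, ← Finset.mul_sum] at hst
    rw [← sub_nonneg]
    have : ‖x - y‖ ^ 2 - ((M : ℝ)⁻¹ * (∑ i, ‖f i x - f i y‖ ^ 2)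
        + s * ((M : ℝ)⁻¹ * ∑ i, ‖(x - f i x) - (y - f i y)‖ ^ 2))
        = (M : ℝ)⁻¹ * ((M : ℝ) * ‖x - y‖ ^ 2
          - (∑ i, ‖f i x - f i y‖ ^ 2 + s * ∑ i, ‖(x - f i x) - (y - f i y)‖ ^ 2)) := by
      field_simp
    rw [this]
    apply mul_nonneg (by positivity)
    linarith
  have hmul := mul_le_mul_of_nonneg_left j2 hs
  linarith

lemma rate (S : E → E) (s : ℝ) (hs : 0 < s) (hQ : QProp s S)
    (xd : E) (hxd : S xd = xd) (y : ℕ → E) (hy : ∀ n, y (n + 1) = S (y n)) :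
    ∀ n : ℕ, s * ((n : ℝ) + 1) * ‖y (n + 1) - y n‖ ^ 2 ≤ ‖y 0 - xd‖ ^ 2 := by
  have dec : ∀ k, ‖y (k + 1) - xd‖ ^ 2 + s * ‖y (k + 1) - y k‖ ^ 2 ≤ ‖y k - xd‖ ^ 2 := by
    intro k
    have h := hQ (y k) xd
    rw [hxd, ← hy k] at h
    have e : (y k - y (k + 1)) - (xd - xd) = -(y (k + 1) - y k) := by abel
    rw [e, norm_neg] at h
    exact h
  have mono : ∀ k, ‖y (k + 2) - y (k + 1)‖ ^ 2 ≤ ‖y (k + 1) - y k‖ ^ 2 := by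
    intro k
    have h := hQ (y (k + 1)) (y k)
    rw [← hy (k + 1), ← hy k] at h
    nlinarith [norm_nonneg ((y (k + 1) - y (k + 2)) - (y k - y (k + 1))),
      sq_nonneg ‖(y (k + 1) - y (k + 2)) - (y k - y (k + 1))‖, hs.le,
      mul_nonneg hs.le (sq_nonneg ‖(y (k + 1) - y (k + 2)) - (y k - y (k + 1))‖)]
  have key : ∀ n : ℕ, s * ((n : ℝ) + 1) * ‖y (n + 1) - y n‖ ^ 2
      ≤ ‖y 0 - xd‖ ^ 2 - ‖y (n + 1) - xd‖ ^ 2 := by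
    intro n
    induction n with
    | zero => have := dec 0; push_cast; linarith
    | succ k ih =>
      have h1 := dec (k + 1)
      have h2 := mono k
      have h3 : s * ((k : ℝ) + 1) * ‖y (k + 2) - y (k + 1)‖ ^ 2
          ≤ s * ((k : ℝ) + 1) * ‖y (k + 1) - y k‖ ^ 2 := by
        apply mul_le_mul_of_nonneg_left h2 (by positivity)
      push_cast
      have hk2 : ((k : ℝ) + 1 + 1) = ((k : ℝ) + 1) + 1 := by ring
      nlinarith [ih, h1, h3]
  intro n
  have h := key n
  nlinarith [sq_nonneg ‖y (n + 1) - xd‖]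

set_option maxHeartbeats 1000000 in
/-- O(1/n) rate for squared successive differences of the
iterates of 𝒯̃_λ. -/
theorem stmt_3 (d M : ℕ) (hM : 0 < M)
    (T : Fin M → EuclideanSpace ℝ (Fin d) → EuclideanSpace ℝ (Fin d))
    (α : ℝ) (hα0 : 0 < α) (hα1 : α ≤ 1)
    (hT : ∀ i, ∃ T' : EuclideanSpace ℝ (Fin d) → EuclideanSpace ℝ (Fin d),
      (∀ x y, ‖T' x - T' y‖ ≤ ‖x - y‖) ∧ ∀ x, T i x = α • T' x + (1 - α) • x)
    (l : ℝ) (hl0 : 0 < l) (hl1 : l < 1 / α)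
    (H : ℕ) (hH : 1 ≤ H)
    (S : EuclideanSpace ℝ (Fin d) → EuclideanSpace ℝ (Fin d))
    (hS : ∀ x, S x = (M : ℝ)⁻¹ • ∑ i, (fun z => l • T i z + (1 - l) • z)^[H] x)
    (ζ : ℝ) (hζ : ζ = (H : ℝ) * α * l / (1 + ((H : ℝ) - 1) * α * l))
    (xd : EuclideanSpace ℝ (Fin d)) (hxd : S xd = xd)
    (y : ℕ → EuclideanSpace ℝ (Fin d)) (hy : ∀ n, y (n + 1) = S (y n)) :
    ∀ n : ℕ, ‖y (n + 1) - y n‖ ^ 2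
      ≤ ‖y 0 - xd‖ ^ 2 / (ζ * (1 - ζ) * ((n : ℝ) + 1)) := by
  intro n
  have hβ0 : 0 < α * l := mul_pos hα0 hl0
  have hβ1 : α * l < 1 := by
    have h := (lt_div_iff₀ hα0).mp hl1
    nlinarith
  have hHR : (0 : ℝ) < H := by exact_mod_cast hH
  have hH1 : (1 : ℝ) ≤ H := by exact_mod_cast hH
  -- each inner operator is (α*l)-averaged
  have hQg : ∀ i, QProp ((1 - α * l) / (α * l)) (fun z => l • T i z + (1 - l) • z) := by
    intro i
    obtain ⟨T', hT'ne, hT'eq⟩ := hT i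
    apply avg_to_Q T' _ (α * l) hβ0 hβ1.le hT'ne
    intro x
    rw [hT'eq x]
    module
  have hQgH : ∀ i, QProp ((1 - α * l) / (α * l) / H)
      ((fun z => l • T i z + (1 - l) • z)^[H]) := fun i =>
    Q_iter _ _ (div_pos (by linarith) hβ0) (hQg i) H hH
  have hQS' := Q_avg hM (fun i => (fun z => l • T i z + (1 - l) • z)^[H]) _
    (le_of_lt (div_pos (div_pos (by linarith) hβ0) hHR)) hQgH
  have hQS : QProp ((1 - α * l) / (α * l) / H) S := by
    intro u v
    rw [hS u, hS v]
    exact hQS' u v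
  have hs : 0 < (1 - α * l) / (α * l) / H := div_pos (div_pos (by linarith) hβ0) hHR
  have hk := rate S _ hs hQS xd hxd y hy n
  -- facts about ζ
  have hD : 0 < 1 + ((H : ℝ) - 1) * α * l := by nlinarith
  have hζ0 : 0 < ζ := by rw [hζ]; exact div_pos (by positivity) hD
  have hζ1 : ζ < 1 := by
    rw [hζ, div_lt_one hD]
    nlinarith
  have hz0 : ζ * (1 + ((H : ℝ) - 1) * α * l) = (H : ℝ) * α * l := by
    rw [hζ]; exact div_mul_cancel₀ _ hD.ne'
  have hz1 : (1 - ζ) * (1 + ((H : ℝ) - 1) * α * l) = 1 - α * l := by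
    rw [hζ, sub_mul, div_mul_cancel₀ _ hD.ne']; ring
  have hm : ζ * (1 - ζ) * ((1 + ((H : ℝ) - 1) * α * l) * (1 + ((H : ℝ) - 1) * α * l))
      = ((H : ℝ) * α * l) * (1 - α * l) := by
    calc ζ * (1 - ζ) * ((1 + ((H : ℝ) - 1) * α * l) * (1 + ((H : ℝ) - 1) * α * l))
        = (ζ * (1 + ((H : ℝ) - 1) * α * l)) * ((1 - ζ) * (1 + ((H : ℝ) - 1) * α * l)) := by
          ring
      _ = ((H : ℝ) * α * l) * (1 - α * l) := by rw [hz0, hz1]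
  have hcmp : ζ * (1 - ζ) ≤ (1 - α * l) / (α * l) / H := by
    rw [div_div, le_div_iff₀ (by positivity)]
    have hDD : (0 : ℝ) < (1 + ((H : ℝ) - 1) * α * l) * (1 + ((H : ℝ) - 1) * α * l) :=
      mul_pos hD hD
    rw [← mul_le_mul_iff_of_pos_right hDD]
    have e1 : ζ * (1 - ζ) * (α * l * (H : ℝ))
          * ((1 + ((H : ℝ) - 1) * α * l) * (1 + ((H : ℝ) - 1) * α * l))
        = (ζ * (1 - ζ) * ((1 + ((H : ℝ) - 1) * α * l) * (1 + ((H : ℝ) - 1) * α * l)))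
          * (α * l * (H : ℝ)) := by ring
    rw [e1, hm]
    nlinarith [mul_nonneg (mul_nonneg (by linarith : (0:ℝ) ≤ 1 - α * l)
      (by linarith : (0:ℝ) ≤ 1 - α * l))
      (by positivity : (0:ℝ) ≤ (1 + ((H : ℝ) - 1) * α * l) + (H : ℝ) * (α * l))]
  -- conclude
  have hnp : (0 : ℝ) < (n : ℝ) + 1 := by positivity
  have hden : 0 < ζ * (1 - ζ) * ((n : ℝ) + 1) := by
    apply mul_pos (mul_pos hζ0 (by linarith)) hnp
  rw [le_div_iff₀ hden]
  have hstep : ζ * (1 - ζ) * ((n : ℝ) + 1) ≤ (1 - α * l) / (α * l) / H * ((n : ℝ) + 1) :=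
    mul_le_mul_of_nonneg_right hcmp hnp.le
  calc ‖y (n + 1) - y n‖ ^ 2 * (ζ * (1 - ζ) * ((n : ℝ) + 1))
      ≤ ‖y (n + 1) - y n‖ ^ 2 * ((1 - α * l) / (α * l) / H * ((n : ℝ) + 1)) :=
        mul_le_mul_of_nonneg_left hstep (sq_nonneg _)
    _ ≤ ‖y 0 - xd‖ ^ 2 := by nlinarith [hk]
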